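/- For all real q, p₀, p₁ with 0 ≤ p₁ ≤ p₀ ≤ 1 and 0 ≤ q ≤ 1, max(q, 1−q, q·p₀ + (1−q)·(1−p₁)) ≥ max(q, 1−q, min(q,1−q)·(1 + (p₀−p₁))) and this maximum is at least 1/2. -/
import Mathlib


theorem lower_bound_chain (q p₀ p₁ : ℝ)
    (h1 : 0 ≤ p₁) (h2 : p₁ ≤ p₀) (h3 : p₀ ≤ 1) (h4 : 0 ≤ q) (h5 : q ≤ 1) :
    max (max q (1 - q)) (q * p₀ + (1 - q) * (1 - p₁)) ≥
      max (max q (1 - q)) (min q (1 - q) * (1 + (p₀ - p₁))) ∧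
    max (max q (1 - q)) (q * p₀ + (1 - q) * (1 - p₁)) ≥ 1 / 2 := by
  constructor
  · apply max_le_max le_rfl
    rcases le_total q (1 - q) with h | h
    · rw [min_eq_left h]; nlinarith
    · rw [min_eq_right h]; nlinarith
  · refine le_trans ?_ (le_max_left _ _)
    rcases le_total q (1 - q) with h | h
    · rw [max_eq_right h]; linarith
    · rw [max_eq_left h]; linarith
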